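/- Let f : X → Y be a surjective local homeomorphism between compact Hausdorff spaces. Then f is a covering map. -/

import Mathlib

open Set Topology

/-- A surjective local homeomorphism between compact Hausdorff spaces is a
covering map. -/
theorem stmt_9
    {X Y : Type*} [TopologicalSpace X] [TopologicalSpace Y]
    [CompactSpace X] [T2Space X] [CompactSpace Y] [T2Space Y]
    (f : X → Y) (hsurj : Function.Surjective f)
    (hloc : IsLocalHomeomorph f) :
    IsCoveringMap f := by
  have hcont : Continuous f := hloc.continuous
  have hopen : IsOpenMap f := hloc.isOpenMap
  intro y
  set F : Set X := f ⁻¹' {y} with hF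
  -- the fiber is discrete
  have hFdisc : DiscreteTopology F := by
    rw [discreteTopology_iff_isOpen_singleton]
    rintro ⟨x, hx⟩
    obtain ⟨U, hUo, hxU, hUinj⟩ := hloc.isLocallyInjective x
    rw [isOpen_induced_iff]
    refine ⟨U, hUo, ?_⟩
    ext ⟨p, hp⟩
    simp only [mem_preimage, mem_singleton_iff, Subtype.mk.injEq]
    constructor
    · intro hpU
      exact hUinj hpU hxU (by simp only [hF, mem_preimage, mem_singleton_iff] at hp hx; rw [hp, hx])
    · rintro rfl; exact hxU
  have hFfin : F.Finite :=
    ((isClosed_singleton.preimage hcont).isCompact).finite (isDiscrete_iff_discreteTopology.mpr hFdisc)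
  have : Finite F := hFfin.to_subtype
  obtain ⟨x₀, hx₀⟩ : ∃ x, f x = y := hsurj y
  -- charts
  choose e he hfe using hloc
  have hfeq : ∀ x p, f p = e x p := fun x p => congrFun (hfe x) p
  -- disjoint open sets separating fiber points
  obtain ⟨D, hD, hDdisj⟩ := hFfin.t2_separation
  set U : X → Set X := fun x => (e x).source ∩ D x with hU
  have hUo : ∀ x, IsOpen (U x) := fun x => (e x).open_source.inter (hD x).2
  have hxU : ∀ x, x ∈ U x := fun x => ⟨he x, (hD x).1⟩
  have hUsrc : ∀ x, U x ⊆ (e x).source := fun x => inter_subset_left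
  -- f image of U x lands in target of e x
  have himg : ∀ x, f '' U x ⊆ (e x).target := by
    rintro x _ ⟨p, hp, rfl⟩
    rw [hfeq x p]
    exact (e x).map_source (hUsrc x hp)
  -- the complementary compact set
  set K : Set X := (⋃ x : F, U ↑x)ᶜ with hK
  have hKc : IsCompact K := by
    rw [hK]
    exact (isOpen_iUnion fun x : F => hUo ↑x).isClosed_compl.isCompact
  -- the evenly covered neighborhood
  set V : Set Y := (⋂ x : F, f '' U ↑x) ∩ (f '' K)ᶜ with hV
  have hVo : IsOpen V :=
    (isOpen_iInter_of_finite fun x : F => hopen _ (hUo ↑x)).inter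
      (hKc.image hcont).isClosed.isOpen_compl
  have hyV : y ∈ V := by
    constructor
    · exact mem_iInter.2 fun x => ⟨↑x, hxU ↑x, x.2⟩
    · rintro ⟨p, hpK, hpy⟩
      exact hpK (mem_iUnion.2 ⟨⟨p, hpy⟩, hxU p⟩)
  -- every point over V lies in exactly one U x
  have hexists : ∀ p, f p ∈ V → ∃ x : F, p ∈ U ↑x := by
    intro p hp
    by_contra h
    push_neg at h
    exact hp.2 ⟨p, fun hmem => (mem_iUnion.1 hmem).elim fun x hx => h x hx, rfl⟩
  have huniq : ∀ (x x' : F) p, p ∈ U ↑x → p ∈ U ↑x' → x = x' := by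
    intro x x' p hx hx'
    by_contra hne
    exact (hDdisj x.2 x'.2 (Subtype.coe_injective.ne hne)).le_bot ⟨hx.2, hx'.2⟩
  -- index function
  have hFne : Nonempty F := ⟨⟨x₀, hx₀⟩⟩
  classical
  set ind : X → F := fun p => if h : ∃ x : F, p ∈ U ↑x then h.choose else Classical.arbitrary F
    with hind
  have hind_mem : ∀ p, f p ∈ V → p ∈ U ↑(ind p) := by
    intro p hp
    have h := hexists p hp
    simp only [hind, dif_pos h]
    exact h.choose_spec
  have hind_eq : ∀ p (x : F), f p ∈ V → p ∈ U ↑x → ind p = x := fun p x hp hpx =>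
    huniq _ _ p (hind_mem p hp) hpx
  -- V is inside each chart's target
  have hVt : ∀ x : F, V ⊆ (e ↑x).target := by
    intro x v hv
    exact himg ↑x (mem_iInter.1 hv.1 x)
  -- symm maps V into U x
  have hsymmU : ∀ (x : F) v, v ∈ V → (e ↑x).symm v ∈ U ↑x := by
    intro x v hv
    obtain ⟨p, hpU, hpv⟩ := mem_iInter.1 hv.1 x
    have : (e ↑x).symm v = p := by
      rw [← hpv, hfeq ↑x p, (e ↑x).left_inv (hUsrc ↑x hpU)]
    rw [this]; exact hpU
  have hfsymm : ∀ (x : F) v, v ∈ V → f ((e ↑x).symm v) = v := fun x v hv => by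
    rw [hfeq ↑x, (e ↑x).right_inv (hVt x hv)]
  exact IsEvenlyCovered.of_trivialization (t := {
      baseSet := V
      open_baseSet := hVo
      source_eq := rfl
      target_eq := rfl
      proj_toFun := fun p _ => rfl
      toFun := fun p => (f p, ind p)
      invFun := fun q => (e ↑q.2).symm q.1
      source := f ⁻¹' V
      target := V ×ˢ univ
      map_source' := fun p hp => ⟨hp, trivial⟩
      map_target' := fun q hq => by
        have h := hfsymm q.2 q.1 hq.1
        show f ((e ↑q.2).symm q.1) ∈ V
        rw [h]
        exact hq.1
      left_inv' := fun p hp => by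
        have := hind_mem p hp
        simp only
        rw [hfeq ↑(ind p) p, (e ↑(ind p)).left_inv (hUsrc _ this)]
      right_inv' := fun q hq => by
        have h1 : f ((e ↑q.2).symm q.1) = q.1 := hfsymm q.2 q.1 hq.1
        have h0 : f ((e ↑q.2).symm q.1) ∈ V := by rw [h1]; exact hq.1
        have h2 : ind ((e ↑q.2).symm q.1) = q.2 :=
          hind_eq _ _ h0 (hsymmU q.2 q.1 hq.1)
        simp only [h1, h2]
      open_source := hVo.preimage hcont
      open_target := hVo.prod isOpen_univ
      continuousOn_toFun := by
        apply ContinuousOn.prodMk (hcont.continuousOn)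
        intro p hp
        apply ContinuousAt.continuousWithinAt
        have hnbhd : U ↑(ind p) ∩ f ⁻¹' V ∈ 𝓝 p :=
          ((hUo _).inter (hVo.preimage hcont)).mem_nhds ⟨hind_mem p hp, hp⟩
        have heq : (fun p' => ind p') =ᶠ[𝓝 p] fun _ => ind p :=
          Filter.eventuallyEq_of_mem hnbhd fun p' hp' => hind_eq p' (ind p) hp'.2 hp'.1
        exact continuousAt_const.congr heq.symm
      continuousOn_invFun := by
        intro q hq
        apply ContinuousAt.continuousWithinAt
        have hsnd : (univ : Set Y) ×ˢ ({q.2} : Set ↥F) ∈ 𝓝 q :=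
          (isOpen_univ.prod (isOpen_discrete _)).mem_nhds ⟨trivial, rfl⟩
        have hct : ContinuousAt (fun q' : Y × F => (e ↑q.2).symm q'.1) q := by
          have : ContinuousAt (e ↑q.2).symm q.1 :=
            ((e ↑q.2).continuousOn_symm.continuousAt
              ((e ↑q.2).open_target.mem_nhds (hVt q.2 hq.1)))
          exact this.comp continuousAt_fst
        refine hct.congr (Filter.eventuallyEq_of_mem hsnd fun q' hq' => ?_)
        have h2 : q'.2 = q.2 := hq'.2
        show (e ↑q.2).symm q'.1 = (e ↑q'.2).symm q'.1
        rw [h2] }) hyV
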